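/- Let p ≡ 1 (mod 4) be prime, F = ℚ(√p) ⊂ ℝ with ring of integers 𝒪, and let m be a positive integer such that every prime divisor q of m satisfies (q/p) ≠ 1, where (·/p) is the Legendre symbol (i.e., no prime divisor of m splits in F). If ν ∈ F satisfies √p·ν ∈ 𝒪 and N_{F/ℚ}(ν) = −m²/p, then there exists a unit u ∈ 𝒪ˣ with N_{F/ℚ}(u) = 1 such that ν = m·u/√p or ν = −m·u/√p. -/

import Mathlib

lemma rat_int_of_prime_mul_sq (p : ℕ) (hp : p.Prime) (r : ℚ) (k : ℤ)
    (h : (p : ℚ) * r ^ 2 = (k : ℚ)) : ∃ B : ℤ, (B : ℚ) = r := by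
  refine ⟨r.num, ?_⟩
  have hd0 : (r.den : ℚ) ≠ 0 := by exact_mod_cast r.den_nz
  have hr : (r.num : ℚ) = r * (r.den : ℚ) := by
    nth_rewrite 2 [← Rat.num_div_den r]
    rw [div_mul_cancel₀ _ hd0]
  have key : (p : ℤ) * r.num ^ 2 = k * (r.den : ℤ) ^ 2 := by
    have : ((p : ℤ) * r.num ^ 2 : ℚ) = ((k * (r.den : ℤ) ^ 2 : ℤ) : ℚ) := by
      push_cast
      rw [hr]
      nlinarith [h]
    exact_mod_cast this
  have hdvd : ((r.den : ℤ)) ^ 2 ∣ (p : ℤ) * r.num ^ 2 := ⟨k, by linarith [key]⟩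
  have hcop : IsCoprime ((r.den : ℤ)) r.num := by
    rw [Int.isCoprime_iff_gcd_eq_one]
    simpa [Int.gcd, Nat.coprime_comm] using r.reduced
  have hdvd2 : ((r.den : ℤ)) ^ 2 ∣ (p : ℤ) :=
    (hcop.pow).dvd_of_dvd_mul_right hdvd
  have hnat : r.den ^ 2 ∣ p := by exact_mod_cast hdvd2
  have hden : r.den = 1 := by
    have hd1 : 1 ≤ r.den := r.pos
    rcases (Nat.Prime.eq_one_or_self_of_dvd hp _ hnat) with h1 | h2
    · nlinarith
    · exfalso
      have hdp : r.den ∣ p := h2 ▸ dvd_pow_self r.den (two_ne_zero)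
      rcases (Nat.Prime.eq_one_or_self_of_dvd hp _ hdp) with g1 | g2
      · rw [g1] at h2; simpa [← h2] using hp.one_lt
      · rw [g2] at h2; nlinarith [hp.one_lt]
  conv_rhs => rw [← Rat.num_div_den r]
  rw [hden]; simp

lemma zmod8_even (a b : ZMod 8) (h : a ^ 2 - 5 * b ^ 2 = 0) :
    ZMod.castHom (by norm_num : (2:ℕ) ∣ 8) (ZMod 2) a = 0 ∧
    ZMod.castHom (by norm_num : (2:ℕ) ∣ 8) (ZMod 2) b = 0 := by
  revert a b; decide

lemma key_dvd (p : ℕ) (hp : p.Prime) (hmod : p % 4 = 1) :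
    ∀ m : ℕ, 0 < m → (∀ q : ℕ, q.Prime → q ∣ m → @legendreSym p ⟨hp⟩ (q : ℤ) ≠ 1) →
    ∀ A B : ℤ, A ^ 2 - (p : ℤ) * B ^ 2 = 4 * (m : ℤ) ^ 2 → (m : ℤ) ∣ A ∧ (m : ℤ) ∣ B := by
  haveI : Fact p.Prime := ⟨hp⟩
  have hpZ : Prime (p : ℤ) := Nat.prime_iff_prime_int.mp hp
  intro m
  induction m using Nat.strong_induction_on with
  | _ m IH =>
    intro hm hq A B h
    rcases eq_or_ne m 1 with rfl | hm1
    · simp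
    · obtain ⟨q, hqp, hqm⟩ : ∃ q : ℕ, q.Prime ∧ q ∣ m :=
        ⟨m.minFac, Nat.minFac_prime hm1, Nat.minFac_dvd m⟩
      obtain ⟨m', rfl⟩ := hqm
      have hq0 : (q : ℤ) ≠ 0 := by exact_mod_cast hqp.ne_zero
      have hm'pos : 0 < m' := by
        rcases Nat.eq_zero_or_pos m' with rfl | h0
        · simp at hm
        · exact h0
      have hq2' : 2 ≤ q := hqp.two_le
      push_cast at h
      have step : (q : ℤ) ∣ A ∧ (q : ℤ) ∣ B := by
        by_cases hqeq : q = p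
        · -- q = p
          have hqp' : (q : ℤ) = (p : ℤ) := by exact_mod_cast congrArg (Nat.cast : ℕ → ℤ) hqeq
          rw [hqp'] at h
          have hA2 : (p : ℤ) ∣ A ^ 2 :=
            ⟨B ^ 2 + 4 * (p : ℤ) * m' ^ 2, by linear_combination h⟩
          obtain ⟨A', rfl⟩ := hpZ.dvd_of_dvd_pow hA2
          have hp0 : (p : ℤ) ≠ 0 := hqp' ▸ hq0
          have hB2 : (p : ℤ) ∣ B ^ 2 := by
            refine ⟨A' ^ 2 - 4 * (m' : ℤ) ^ 2, ?_⟩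
            have h2 : (p : ℤ) * B ^ 2 =
                (p : ℤ) * ((p : ℤ) * (A' ^ 2 - 4 * (m' : ℤ) ^ 2)) := by
              linear_combination -h
            exact mul_left_cancel₀ hp0 h2
          exact ⟨hqp' ▸ Dvd.intro A' rfl, hqp' ▸ hpZ.dvd_of_dvd_pow hB2⟩
        · by_cases hq2 : q = 2
          · -- q = 2, p % 8 = 5
            subst hq2
            have hp2 : p ≠ 2 := fun hpe => hqeq hpe.symm
            have hp5 : 5 ≤ p := by
              have := hp.two_le; omega
            have hns : ¬ IsSquare (2 : ZMod p) := by
              have hne : ((2 : ℤ) : ZMod p) ≠ 0 := by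
                rw [Ne, ZMod.intCast_zmod_eq_zero_iff_dvd]
                intro hdvd
                have := Int.le_of_dvd (by norm_num) hdvd
                omega
              intro hsq2
              have h1 := hq 2 Nat.prime_two ⟨m', rfl⟩
              refine h1 ((legendreSym.eq_one_iff p (by exact_mod_cast hne)).mpr ?_)
              push_cast
              exact hsq2
            have h8 : p % 8 = 5 := by
              have hiff := ZMod.exists_sq_eq_two_iff (p := p) hp2
              have : ¬ (p % 8 = 1 ∨ p % 8 = 7) := fun hor => hns (hiff.mpr hor)
              omega
            have hcast := congrArg (Int.cast : ℤ → ZMod 8) h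
            push_cast at hcast
            have hp8 : ((p : ℕ) : ZMod 8) = 5 := by
              have h5 : p = 8 * (p / 8) + 5 := by omega
              rw [h5]; push_cast
              rw [show (8 : ZMod 8) = 0 by decide]; ring
            rw [hp8] at hcast
            have h0 : ((A : ZMod 8)) ^ 2 - 5 * ((B : ZMod 8)) ^ 2 = 0 := by
              rw [hcast]
              have h16 : (4 : ZMod 8) * 2 ^ 2 = 0 := by decide
              linear_combination (m' : ZMod 8) ^ 2 * h16
            obtain ⟨hA0, hB0⟩ := zmod8_even _ _ h0
            rw [map_intCast] at hA0 hB0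
            exact ⟨(ZMod.intCast_zmod_eq_zero_iff_dvd A 2).mp hA0,
                   (ZMod.intCast_zmod_eq_zero_iff_dvd B 2).mp hB0⟩
          · -- q odd, q ≠ p
            haveI : Fact q.Prime := ⟨hqp⟩
            have hcast := congrArg (Int.cast : ℤ → ZMod q) h
            push_cast at hcast
            rw [ZMod.natCast_self] at hcast
            have hpq0 : ((p : ℤ) : ZMod q) ≠ 0 := by
              rw [Ne, ZMod.intCast_zmod_eq_zero_iff_dvd]
              intro hdvd
              have : q ∣ p := by exact_mod_cast hdvd
              exact hqeq ((Nat.prime_dvd_prime_iff_eq hqp hp).mp this)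
            have hB : (B : ZMod q) = 0 := by
              by_contra hB
              have hsq : IsSquare ((p : ℤ) : ZMod q) := by
                refine ⟨(A : ZMod q) * (B : ZMod q)⁻¹, ?_⟩
                have hBinv : (B : ZMod q) * (B : ZMod q)⁻¹ = 1 :=
                  mul_inv_cancel₀ hB
                have expand : ((A : ZMod q) * (B : ZMod q)⁻¹) * ((A : ZMod q) * (B : ZMod q)⁻¹)
                    = (A : ZMod q) ^ 2 * ((B : ZMod q)⁻¹) ^ 2 := by ring
                rw [expand]
                have hA2 : (A : ZMod q) ^ 2 = ((p : ℤ) : ZMod q) * (B : ZMod q) ^ 2 := by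
                  push_cast at hcast ⊢
                  linear_combination hcast
                rw [hA2]
                have : (B : ZMod q) ^ 2 * ((B : ZMod q)⁻¹) ^ 2 = 1 := by
                  rw [← mul_pow, hBinv, one_pow]
                rw [mul_assoc, this, mul_one]
              have h1 : legendreSym q ((p : ℕ) : ℤ) = 1 :=
                (legendreSym.eq_one_iff q (by exact_mod_cast hpq0)).mpr (by exact_mod_cast hsq)
              have hrec := legendreSym.quadratic_reciprocity_one_mod_four hmod hq2
              rw [hrec] at h1
              exact hq q hqp ⟨m', rfl⟩ h1
            have hA : (A : ZMod q) = 0 := by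
              have hsq0 : ((A : ZMod q)) ^ 2 = 0 := by
                rw [hB] at hcast
                linear_combination hcast
              exact pow_eq_zero_iff two_ne_zero |>.mp hsq0
            exact ⟨(ZMod.intCast_zmod_eq_zero_iff_dvd A q).mp hA,
                   (ZMod.intCast_zmod_eq_zero_iff_dvd B q).mp hB⟩
      obtain ⟨⟨A', rfl⟩, ⟨B', rfl⟩⟩ := step
      have h' : A' ^ 2 - (p : ℤ) * B' ^ 2 = 4 * (m' : ℤ) ^ 2 := by
        have h2 : (q : ℤ) ^ 2 * (A' ^ 2 - (p : ℤ) * B' ^ 2) = (q : ℤ) ^ 2 * (4 * (m' : ℤ) ^ 2) := by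
          linear_combination h
        exact mul_left_cancel₀ (pow_ne_zero 2 hq0) h2
      have hlt : m' < q * m' := by
        calc m' = 1 * m' := (one_mul m').symm
        _ < q * m' := by exact (Nat.mul_lt_mul_right hm'pos).mpr (by omega)
      have hq' : ∀ r : ℕ, r.Prime → r ∣ m' → legendreSym p (r : ℤ) ≠ 1 :=
        fun r h1 h2 => hq r h1 (h2.trans (dvd_mul_left m' q))
      obtain ⟨hA, hB⟩ := IH m' hlt hm'pos hq' A' B' h'
      constructor
      · push_cast
        exact mul_dvd_mul_left (q : ℤ) hA
      · push_cast
        exact mul_dvd_mul_left (q : ℤ) hB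

open Polynomial in
lemma trace_norm_int (p : ℕ) (hp : p.Prime) (x y : ℚ)
    (hint : IsIntegral ℤ ((p : ℝ) * (y : ℝ) + (x : ℝ) * Real.sqrt p)) :
    (∃ A : ℤ, (A : ℚ) = 2 * p * y) ∧ (∃ e : ℤ, (e : ℚ) = p ^ 2 * y ^ 2 - p * x ^ 2) := by
  have hp0 : (0 : ℝ) ≤ (p : ℝ) := by positivity
  have hsq : Real.sqrt p * Real.sqrt p = (p : ℝ) := Real.mul_self_sqrt hp0
  rcases eq_or_ne x 0 with rfl | hx
  · -- x = 0 : t rational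
    have ht : ((p : ℝ) * (y : ℝ) + (0:ℚ) * Real.sqrt p) = algebraMap ℚ ℝ ((p : ℚ) * y) := by
      push_cast; simp [eq_ratCast]
    rw [ht] at hint
    rw [isIntegral_algebraMap_iff (algebraMap ℚ ℝ).injective] at hint
    obtain ⟨r, hr⟩ := IsIntegrallyClosed.isIntegral_iff.mp hint
    have hr' : (r : ℚ) = (p : ℚ) * y := by exact_mod_cast hr
    exact ⟨⟨2 * r, by push_cast; rw [hr']; ring⟩,
           ⟨r ^ 2, by push_cast; rw [hr']; ring⟩⟩
  · -- x ≠ 0 : t irrational, degree 2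
    set t : ℝ := (p : ℝ) * (y : ℝ) + (x : ℝ) * Real.sqrt p with htdef
    have hirr : Irrational t := by
      have h1 : Irrational ((x : ℚ) * Real.sqrt p) := (hp.irrational_sqrt).ratCast_mul hx
      have h2 : Irrational (((p : ℚ) * y : ℚ) + (x : ℚ) * Real.sqrt p) := h1.ratCast_add (q := _)
      have : (((p : ℚ) * y : ℚ) : ℝ) = (p : ℝ) * (y : ℝ) := by push_cast; ring
      rwa [this] at h2
    have hQ : IsIntegral ℚ t := hint.tower_top
    set P : ℚ[X] := X ^ 2 + (C (-(2 * p * y)) * X + C (p ^ 2 * y ^ 2 - p * x ^ 2)) with hPdef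
    have hPmonic : P.Monic := monic_X_pow_add (by
      apply lt_of_le_of_lt (Polynomial.degree_linear_le)
      norm_num)
    have hProot : aeval t P = 0 := by
      simp only [hPdef, map_add, map_mul, map_pow, aeval_X, aeval_C, eq_ratCast]
      rw [htdef]
      push_cast
      linear_combination (x : ℝ) ^ 2 * hsq
    have hdvd : minpoly ℚ t ∣ P := minpoly.dvd ℚ t hProot
    have hmin_monic : (minpoly ℚ t).Monic := minpoly.monic hQ
    have hdeg2 : 2 ≤ (minpoly ℚ t).natDegree := by
      rw [minpoly.two_le_natDegree_iff hQ]
      rintro ⟨r, hr⟩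
      exact hirr ⟨r, by rw [← hr]; simp [eq_ratCast]⟩
    have hPdeg : P.natDegree = 2 := by
      rw [hPdef]
      compute_degree!
    have hPeq : P = minpoly ℚ t := by
      obtain ⟨g, hg⟩ := hdvd
      have hP0 : P ≠ 0 := hPmonic.ne_zero
      have hg0 : g ≠ 0 := by rintro rfl; rw [mul_zero] at hg; exact hP0 hg
      have hdeg : P.natDegree = (minpoly ℚ t).natDegree + g.natDegree := by
        rw [hg, Polynomial.natDegree_mul hmin_monic.ne_zero hg0]
      have hgdeg : g.natDegree = 0 := by omega
      have hglead : g.coeff 0 = 1 := by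
        have hl := congrArg Polynomial.leadingCoeff hg
        rw [Polynomial.leadingCoeff_mul, hmin_monic.leadingCoeff, hPmonic.leadingCoeff,
          one_mul, Polynomial.leadingCoeff, hgdeg] at hl
        exact hl.symm
      have hgC : g = 1 := by
        rw [Polynomial.eq_C_of_natDegree_eq_zero hgdeg, hglead, map_one]
      rw [hg, hgC, mul_one]
    have hmap : minpoly ℚ t = (minpoly ℤ t).map (algebraMap ℤ ℚ) :=
      minpoly.isIntegrallyClosed_eq_field_fractions' ℚ hint
    have hco1 : P.coeff 1 = -(2 * p * y) := by
      rw [hPdef]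
      simp only [Polynomial.coeff_add, Polynomial.coeff_C_mul, Polynomial.coeff_X_pow,
        Polynomial.coeff_X_one, Polynomial.coeff_C]
      norm_num
    have hco0 : P.coeff 0 = p ^ 2 * y ^ 2 - p * x ^ 2 := by
      rw [hPdef]
      simp only [Polynomial.coeff_add, Polynomial.coeff_C_mul, Polynomial.coeff_X_pow,
        Polynomial.coeff_X_zero, Polynomial.coeff_C]
      norm_num
    constructor
    · refine ⟨-((minpoly ℤ t).coeff 1), ?_⟩
      have := congrArg (fun q : ℚ[X] => q.coeff 1) (hPeq.trans hmap)
      simp only [Polynomial.coeff_map] at this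
      rw [hco1] at this
      push_cast
      rw [show (algebraMap ℤ ℚ) ((minpoly ℤ t).coeff 1) = (((minpoly ℤ t).coeff 1 : ℤ) : ℚ) from rfl] at this
      linarith [this]
    · refine ⟨(minpoly ℤ t).coeff 0, ?_⟩
      have := congrArg (fun q : ℚ[X] => q.coeff 0) (hPeq.trans hmap)
      simp only [Polynomial.coeff_map] at this
      rw [hco0] at this
      exact_mod_cast this.symm

open Polynomial in
/-- Let `p ≡ 1 (mod 4)` be prime, `F = ℚ(√p) ⊂ ℝ` with ring of integers `𝒪`, and `m` a
positive integer all of whose prime divisors `q` satisfy `(q/p) ≠ 1`. If `ν = x + y√p ∈ F`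
satisfies `√p·ν ∈ 𝒪` (i.e. `√p·ν` is integral over `ℤ`) and `N_{F/ℚ}(ν) = x² − p·y² = −m²/p`,
then there is a unit `u = c + d√p` of `𝒪` (both `u` and its conjugate are integral and
`N(u) = u·ū = 1`) such that `ν = m·u/√p` or `ν = −m·u/√p`. -/
theorem inverse_different_norm_elements (p m : ℕ) (hp : p.Prime) (hmod : p % 4 = 1)
    (hm : 0 < m)
    (hq : ∀ q : ℕ, q.Prime → q ∣ m → @legendreSym p ⟨hp⟩ (q : ℤ) ≠ 1)
    (x y : ℚ)
    (hint : IsIntegral ℤ (Real.sqrt p * ((x : ℝ) + (y : ℝ) * Real.sqrt p)))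
    (hnorm : x ^ 2 - (p : ℚ) * y ^ 2 = -(m : ℚ) ^ 2 / p) :
    ∃ c d : ℚ,
      IsIntegral ℤ ((c : ℝ) + (d : ℝ) * Real.sqrt p) ∧
      IsIntegral ℤ ((c : ℝ) - (d : ℝ) * Real.sqrt p) ∧
      ((c : ℝ) + (d : ℝ) * Real.sqrt p) * ((c : ℝ) - (d : ℝ) * Real.sqrt p) = 1 ∧
      ((x : ℝ) + (y : ℝ) * Real.sqrt p
          = (m : ℝ) * ((c : ℝ) + (d : ℝ) * Real.sqrt p) / Real.sqrt p ∨
        (x : ℝ) + (y : ℝ) * Real.sqrt p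
          = -((m : ℝ) * ((c : ℝ) + (d : ℝ) * Real.sqrt p) / Real.sqrt p)) := by
  have hppos : 0 < p := hp.pos
  have hp0R : (0 : ℝ) ≤ (p : ℝ) := by positivity
  have hsq : Real.sqrt p * Real.sqrt p = (p : ℝ) := Real.mul_self_sqrt hp0R
  have hpQ : (p : ℚ) ≠ 0 := by positivity
  have hmQ : (m : ℚ) ≠ 0 := by positivity
  -- rewrite the integrality hypothesis
  have hint' : IsIntegral ℤ ((p : ℝ) * (y : ℝ) + (x : ℝ) * Real.sqrt p) := by
    have heq : Real.sqrt p * ((x : ℝ) + (y : ℝ) * Real.sqrt p)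
        = (p : ℝ) * (y : ℝ) + (x : ℝ) * Real.sqrt p := by
      linear_combination (y : ℝ) * hsq
    rwa [heq] at hint
  obtain ⟨⟨A, hA⟩, ⟨e, he⟩⟩ := trace_norm_int p hp x y hint'
  -- B := 2x is an integer
  obtain ⟨B, hB⟩ : ∃ B : ℤ, (B : ℚ) = 2 * x := by
    refine rat_int_of_prime_mul_sq p hp (2 * x) (A ^ 2 - 4 * e) ?_
    push_cast
    rw [hA, he]
    ring
  -- the norm equation over ℤ
  have hnormZ : A ^ 2 - (p : ℤ) * B ^ 2 = 4 * (m : ℤ) ^ 2 := by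
    have hcast : ((A ^ 2 - (p : ℤ) * B ^ 2 : ℤ) : ℚ) = ((4 * (m : ℤ) ^ 2 : ℤ) : ℚ) := by
      push_cast
      rw [hA, hB]
      have hn2 : (p : ℚ) * x ^ 2 - (p : ℚ) ^ 2 * y ^ 2 = -(m : ℚ) ^ 2 := by
        field_simp at hnorm
        linear_combination hnorm
      linear_combination (-4 : ℚ) * hn2
    exact_mod_cast hcast
  obtain ⟨hmA, -⟩ := key_dvd p hp hmod m hm hq A B hnormZ
  obtain ⟨a, ha⟩ := hmA
  obtain ⟨c, hc⟩ : ∃ c : ℚ, c = (p : ℚ) * y / m := ⟨_, rfl⟩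
  obtain ⟨d, hd⟩ : ∃ d : ℚ, d = x / m := ⟨_, rfl⟩
  have haQ : ((A : ℚ)) = (m : ℚ) * (a : ℚ) := by exact_mod_cast congrArg (Int.cast : ℤ → ℚ) ha
  have hca : (a : ℚ) = 2 * c := by
    rw [hc]
    field_simp
    rw [haQ] at hA
    linear_combination hA
  have hmc : (m : ℚ) * c = (p : ℚ) * y := by rw [hc]; field_simp
  have hmd : (m : ℚ) * d = x := by rw [hd]; field_simp
  have hnorm1 : c ^ 2 - (p : ℚ) * d ^ 2 = 1 := by
    rw [hc, hd]
    field_simp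
    field_simp at hnorm
    linear_combination -hnorm
  have hcaR : ((a : ℤ) : ℝ) = 2 * ((c : ℚ) : ℝ) := by exact_mod_cast congrArg (Rat.cast : ℚ → ℝ) hca
  have hnorm1R : ((c : ℚ) : ℝ) ^ 2 - (p : ℝ) * ((d : ℚ) : ℝ) ^ 2 = 1 := by
    exact_mod_cast congrArg (Rat.cast : ℚ → ℝ) hnorm1
  have hmcR : (m : ℝ) * ((c : ℚ) : ℝ) = (p : ℝ) * ((y : ℚ) : ℝ) := by
    exact_mod_cast congrArg (Rat.cast : ℚ → ℝ) hmc
  have hmdR : (m : ℝ) * ((d : ℚ) : ℝ) = ((x : ℚ) : ℝ) := by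
    exact_mod_cast congrArg (Rat.cast : ℚ → ℝ) hmd
  have hs0 : Real.sqrt p ≠ 0 := by
    refine ne_of_gt (Real.sqrt_pos.mpr ?_)
    exact_mod_cast hppos
  have hPmon : (X ^ 2 + (C (-a) * X + C 1) : ℤ[X]).Monic :=
    monic_X_pow_add (lt_of_le_of_lt (Polynomial.degree_linear_le) (by norm_num))
  refine ⟨c, d, ?_, ?_, ?_, Or.inl ?_⟩
  · refine ⟨X ^ 2 + (C (-a) * X + C 1), hPmon, ?_⟩
    simp only [Polynomial.eval₂_add, Polynomial.eval₂_mul, Polynomial.eval₂_pow,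
      Polynomial.eval₂_X, Polynomial.eval₂_C]
    simp only [eq_intCast]
    push_cast
    linear_combination ((d : ℚ) : ℝ) ^ 2 * hsq - hnorm1R
      - (((c : ℚ) : ℝ) + ((d : ℚ) : ℝ) * Real.sqrt p) * hcaR
  · refine ⟨X ^ 2 + (C (-a) * X + C 1), hPmon, ?_⟩
    simp only [Polynomial.eval₂_add, Polynomial.eval₂_mul, Polynomial.eval₂_pow,
      Polynomial.eval₂_X, Polynomial.eval₂_C]
    simp only [eq_intCast]
    push_cast
    linear_combination ((d : ℚ) : ℝ) ^ 2 * hsq - hnorm1R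
      - (((c : ℚ) : ℝ) - ((d : ℚ) : ℝ) * Real.sqrt p) * hcaR
  · linear_combination (-(((d : ℚ) : ℝ) ^ 2)) * hsq + hnorm1R
  · rw [eq_div_iff hs0]
    linear_combination ((y : ℚ) : ℝ) * hsq - hmcR - Real.sqrt p * hmdR
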